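/- Let $\mathcal{X} \in \mathbb{C}^{n_1 \times \cdots \times n_d}$. For each $1 \le k \le d-1$ there exists a TT representation of $\mathcal{X}$ whose $k$-th core size equals $\mathrm{rank}(X_k)$; in particular, the minimal TT rank $r_k$ satisfies $r_k \le \mathrm{rank}(X_k)$ for all $k$. -/

import Mathlib

open Module in
theorem rank_factorization {m m' : Type*} [Fintype m] [Fintype m'] [DecidableEq m']
    (M : Matrix m m' ℂ) :
    ∃ U : m → Fin M.rank → ℂ, ∃ V : Fin M.rank → m' → ℂ,
      ∀ a b, M a b = ∑ ρ, U a ρ * V ρ b := by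
  set R := LinearMap.range M.mulVecLin with hR
  have hrank : finrank ℂ R = M.rank := rfl
  let b : Basis (Fin M.rank) ℂ R := finBasisOfFinrankEq ℂ R hrank
  have hcol : ∀ c : m', (fun a => M a c) ∈ R := by
    intro c
    exact ⟨Pi.single c 1, by simp [Matrix.mulVecLin]; rfl⟩
  refine ⟨fun a ρ => (b ρ : m → ℂ) a, fun ρ c => b.repr ⟨_, hcol c⟩ ρ, fun a c => ?_⟩
  have := b.sum_repr ⟨fun a => M a c, hcol c⟩
  have h2 := congrArg (fun x : R => (x : m → ℂ) a) this
  simp only [AddSubmonoidClass.coe_finset_sum, Finset.sum_apply, SetLike.val_smul,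
    Pi.smul_apply, smul_eq_mul] at h2
  rw [← h2]
  exact Finset.sum_congr rfl fun ρ _ => mul_comm _ _

namespace TTaux

variable {d : ℕ} (n : Fin d → ℕ)

/-- prefix index type -/
abbrev PT (j : ℕ) : Type := (i : {i : Fin d // (i : ℕ) < j}) → Fin (n i.1)
/-- suffix index type -/
abbrev ST (j : ℕ) : Type := (i : {i : Fin d // ¬ (i : ℕ) < j}) → Fin (n i.1)

def resP (i : (j : Fin d) → Fin (n j)) (j : ℕ) : PT n j := fun t => i t.1
def resS (i : (j : Fin d) → Fin (n j)) (j : ℕ) : ST n j := fun t => i t.1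

def extP {j : ℕ} (hd : j < d) (p : PT n j) (x : Fin (n ⟨j, hd⟩)) : PT n (j + 1) :=
  fun t => if h : (t.1 : ℕ) < j then p ⟨t.1, h⟩ else
    cast (congrArg (fun u => Fin (n u)) (show (⟨j, hd⟩ : Fin d) = t.1 from
      Fin.ext (by simp only [Fin.val_mk]; omega))) x

def consS {j : ℕ} (hd : j < d) (x : Fin (n ⟨j, hd⟩)) (q : ST n (j + 1)) : ST n j :=
  fun t => if h : (t.1 : ℕ) < j + 1 then
    cast (congrArg (fun u => Fin (n u)) (show (⟨j, hd⟩ : Fin d) = t.1 from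
      Fin.ext (by simp only [Fin.val_mk]; omega))) x
  else q ⟨t.1, h⟩

theorem extP_res (i : (j : Fin d) → Fin (n j)) {j : ℕ} (hd : j < d) :
    extP n hd (resP n i j) (i ⟨j, hd⟩) = resP n i (j + 1) := by
  funext t
  rcases t with ⟨t1, ht1⟩
  simp only [extP, resP]
  split
  · rfl
  · next h =>
    have : (⟨j, hd⟩ : Fin d) = t1 := Fin.ext (by simp only [Fin.val_mk]; omega)
    subst this
    rfl

theorem consS_res (i : (j : Fin d) → Fin (n j)) {j : ℕ} (hd : j < d) :
    consS n hd (i ⟨j, hd⟩) (resS n i (j + 1)) = resS n i j := by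
  funext t
  rcases t with ⟨t1, ht1⟩
  simp only [consS, resS]
  split
  · next h =>
    have : (⟨j, hd⟩ : Fin d) = t1 := Fin.ext (by simp only [Fin.val_mk]; omega)
    subst this
    rfl
  · rfl

instance : Subsingleton (PT n 0) := by
  have : IsEmpty {i : Fin d // (i : ℕ) < 0} := ⟨fun t => by omega⟩
  infer_instance

instance : Subsingleton (ST n d) := by
  have : IsEmpty {i : Fin d // ¬ (i : ℕ) < d} := ⟨fun t => t.2 t.1.2⟩
  infer_instance

variable (k r : ℕ)

def TT (j : ℕ) : Type := if j < k then PT n j else if j = k then Fin r else ST n j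

instance (j : ℕ) : Fintype (TT n k r j) := by
  unfold TT; split_ifs <;> infer_instance

theorem TT_P {j : ℕ} (h : j < k) : TT n k r j = PT n j := if_pos h
theorem TT_R : TT n k r k = Fin r := by simp [TT]
theorem TT_S {j : ℕ} (h : k < j) : TT n k r j = ST n j := by
  simp [TT, Nat.lt_asymm h, Nat.ne_of_gt h]

theorem card_TT_zero (hk : 0 < k) : Fintype.card (TT n k r 0) = 1 := by
  have h1 : Fintype.card (TT n k r 0) ≤ 1 :=
    Fintype.card_le_one_iff_subsingleton.2 (by rw [TT_P n k r hk]; infer_instance)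
  have h2 : 0 < Fintype.card (TT n k r 0) :=
    Fintype.card_pos_iff.2 (by rw [TT_P n k r hk]; exact ⟨fun t => absurd t.2 (by omega)⟩)
  omega

theorem card_TT_d (hk : k < d) : Fintype.card (TT n k r d) = 1 := by
  have h1 : Fintype.card (TT n k r d) ≤ 1 :=
    Fintype.card_le_one_iff_subsingleton.2 (by rw [TT_S n k r hk]; infer_instance)
  have h2 : 0 < Fintype.card (TT n k r d) :=
    Fintype.card_pos_iff.2 (by rw [TT_S n k r hk]; exact ⟨fun t => absurd t.1.2 t.2⟩)
  omega

theorem card_TT_k : Fintype.card (TT n k r k) = r := by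
  rw [Fintype.card_congr (Equiv.cast (TT_R n k r))]
  exact Fintype.card_fin r


section Cores

variable {d : ℕ} (n : Fin d → ℕ) (k r : ℕ)
variable (U : PT n k → Fin r → ℂ) (V : Fin r → ST n k → ℂ)

def g (j : Fin d) (a : TT n k r j) (x : Fin (n j)) (b : TT n k r ((j : ℕ) + 1)) : ℂ :=
  if h1 : (j : ℕ) + 1 < k then
    (if cast (TT_P n k r h1) b
        = extP n j.2 (cast (TT_P n k r (by omega)) a) x then 1 else 0)
  else if h2 : (j : ℕ) + 1 = k then
    U (cast (congrArg (PT n) h2) (extP n j.2 (cast (TT_P n k r (by omega)) a) x))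
      (cast (by rw [h2]; exact TT_R n k r) b)
  else if h3 : (j : ℕ) = k then
    V (cast (by rw [h3]; exact TT_R n k r) a)
      (cast (congrArg (ST n) h3)
        (consS n j.2 x (cast (TT_S n k r (show k < (j : ℕ) + 1 by omega)) b)))
  else
    (if cast (TT_S n k r (by omega)) a
        = consS n j.2 x (cast (TT_S n k r (by omega)) b) then 1 else 0)

variable (i : (j : Fin d) → Fin (n j))

def Phi (ρ : Fin r) (j : ℕ) : TT n k r j :=
  if h : j < k then cast (TT_P n k r h).symm (resP n i j)
  else if h2 : j = k then cast (show Fin r = TT n k r j by rw [h2, TT_R]) ρ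
  else cast (TT_S n k r (by omega)).symm (resS n i j)

variable {n k r}

theorem cast_resP {m m' : ℕ} (h : m = m') (e : PT n m = PT n m') :
    cast e (resP n i m) = resP n i m' := by subst h; simp

theorem cast_resS {m m' : ℕ} (h : m = m') (e : ST n m = ST n m') :
    cast e (resS n i m) = resS n i m' := by subst h; simp

theorem cast_Phi_P {ρ : Fin r} {j : ℕ} (h : j < k) (e : TT n k r j = PT n j) :
    cast e (Phi n k r i ρ j) = resP n i j := by
  unfold Phi; rw [dif_pos h]; simp [cast_cast]

theorem cast_Phi_R {ρ : Fin r} {j : ℕ} (h : j = k) (e : TT n k r j = Fin r) :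
    cast e (Phi n k r i ρ j) = ρ := by
  subst h; unfold Phi
  rw [dif_neg (lt_irrefl _), dif_pos rfl]; simp [cast_cast]

theorem cast_Phi_S {ρ : Fin r} {j : ℕ} (h : k < j) (e : TT n k r j = ST n j) :
    cast e (Phi n k r i ρ j) = resS n i j := by
  unfold Phi
  rw [dif_neg (by omega), dif_neg (by omega)]; simp [cast_cast]

theorem Phi_eq_of_cast_P {j : ℕ} {x : TT n k r j} {ρ : Fin r} (h : j < k)
    (e : TT n k r j = PT n j) (hx : cast e x = resP n i j) :
    x = Phi n k r i ρ j := by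
  apply (Equiv.cast e).injective
  simpa [Equiv.cast, hx] using (cast_Phi_P i h e).symm

end Cores

section Main

variable {d : ℕ} {n : Fin d → ℕ} {k r : ℕ}
variable (U : PT n k → Fin r → ℂ) (V : Fin r → ST n k → ℂ)
variable (i : (j : Fin d) → Fin (n j))

theorem prod_g_Phi (hk1 : 1 ≤ k) (hkd : k < d) (ρ : Fin r) :
    (∏ j : Fin d, g n k r U V j (Phi n k r i ρ (j : ℕ)) (i j)
        (Phi n k r i ρ ((j : ℕ) + 1)))
      = U (resP n i k) ρ * V ρ (resS n i k) := by
  set a : Fin d := ⟨k - 1, by omega⟩ with ha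
  set b : Fin d := ⟨k, hkd⟩ with hb
  have hab : a ≠ b := by simp [ha, hb, Fin.ext_iff]; omega
  have hones : ∀ x ∈ Finset.univ, x ∉ ({a, b} : Finset (Fin d)) →
      g n k r U V x (Phi n k r i ρ (x : ℕ)) (i x) (Phi n k r i ρ ((x : ℕ) + 1)) = 1 := by
    intro x _ hx
    simp only [Finset.mem_insert, Finset.mem_singleton, ha, hb, Fin.ext_iff] at hx
    push_neg at hx
    rcases Nat.lt_or_ge ((x : ℕ) + 1) k with h1 | h1
    · unfold g
      rw [dif_pos h1, cast_Phi_P i h1, cast_Phi_P i (by omega), if_pos]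
      exact (extP_res n i x.2).symm
    · have h2 : k < (x : ℕ) := by omega
      unfold g
      rw [dif_neg (by omega), dif_neg (by omega), dif_neg (by omega),
        cast_Phi_S i h2, cast_Phi_S i (by omega), if_pos]
      exact (consS_res n i x.2).symm
  rw [← Finset.prod_subset (Finset.subset_univ ({a, b} : Finset (Fin d))) hones,
    Finset.prod_pair hab]
  have hfa : g n k r U V a (Phi n k r i ρ (a : ℕ)) (i a) (Phi n k r i ρ ((a : ℕ) + 1))
      = U (resP n i k) ρ := by
    have h2 : (a : ℕ) + 1 = k := by simp [ha]; omega
    unfold g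
    rw [dif_neg (by omega), dif_pos h2, cast_Phi_P i (by omega), cast_Phi_R i h2,
      extP_res n i a.2, cast_resP i h2]
  have hfb : g n k r U V b (Phi n k r i ρ (b : ℕ)) (i b) (Phi n k r i ρ ((b : ℕ) + 1))
      = V ρ (resS n i k) := by
    have h3 : (b : ℕ) = k := rfl
    unfold g
    rw [dif_neg (by omega), dif_neg (by omega), dif_pos h3, cast_Phi_R i h3,
      cast_Phi_S i (by omega), consS_res n i b.2, cast_resS i h3]
  rw [hfa, hfb]

end Main

section MainB

variable {d : ℕ} {n : Fin d → ℕ} {k r : ℕ}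
variable (U : PT n k → Fin r → ℂ) (V : Fin r → ST n k → ℂ)
variable (i : (j : Fin d) → Fin (n j))

theorem Phi_eq_of_cast_R {j : ℕ} {x : TT n k r j} {ρ : Fin r} (h : j = k)
    (e : TT n k r j = Fin r) (hx : cast e x = ρ) :
    x = Phi n k r i ρ j := by
  apply (Equiv.cast e).injective
  simpa [Equiv.cast, hx] using (cast_Phi_R i h e).symm

theorem Phi_eq_of_cast_S {j : ℕ} {x : TT n k r j} {ρ : Fin r} (h : k < j)
    (e : TT n k r j = ST n j) (hx : cast e x = resS n i j) :
    x = Phi n k r i ρ j := by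
  apply (Equiv.cast e).injective
  simpa [Equiv.cast, hx] using (cast_Phi_S i h e).symm

theorem prod_g_ne_zero (hk1 : 1 ≤ k) (hkd : k < d)
    (β : (j : Fin (d + 1)) → TT n k r (j : ℕ))
    (hne : (∏ j : Fin d, g n k r U V j (β j.castSucc) (i j) (β j.succ)) ≠ 0) :
    β = fun j : Fin (d + 1) =>
      Phi n k r i (cast (TT_R n k r) (β ⟨k, by omega⟩)) (j : ℕ) := by
  set ρ : Fin r := cast (TT_R n k r) (β ⟨k, by omega⟩) with hρ
  have hfac : ∀ j : Fin d,
      g n k r U V j (β j.castSucc) (i j) (β j.succ) ≠ 0 := by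
    intro j hzero
    exact hne (Finset.prod_eq_zero (Finset.mem_univ j) hzero)
  have claimP : ∀ m, ∀ hm : m < k, β ⟨m, by omega⟩ = Phi n k r i ρ m := by
    intro m
    induction m with
    | zero =>
      intro _
      exact (Equiv.cast (TT_P n k r hk1)).injective (Subsingleton.elim _ _)
    | succ m ih =>
      intro hm
      have hβm := ih (by omega)
      have hmd1 : m < d := by omega
      have hf := hfac ⟨m, hmd1⟩
      have hf' : g n k r U V ⟨m, hmd1⟩ (β ⟨m, by omega⟩) (i ⟨m, hmd1⟩)
          (β ⟨m + 1, by omega⟩) ≠ 0 := hf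
      clear hf
      unfold g at hf'
      split at hf'
      · rw [ite_ne_right_iff] at hf'
        obtain ⟨hcond, -⟩ := hf'
        rw [hβm, cast_Phi_P i (by omega)] at hcond
        rw [extP_res n i hmd1] at hcond
        exact Phi_eq_of_cast_P i hm _ hcond
      · exfalso
        rename_i h1
        simp only [Fin.val_mk] at h1
        omega
  have claimS : ∀ t m, ∀ _ : k < m, ∀ _ : m + t = d,
      β ⟨m, by omega⟩ = Phi n k r i ρ m := by
    intro t
    induction t with
    | zero =>
      intro m hkm hmd
      have hmd' : m = d := by omega
      subst hmd'
      exact (Equiv.cast (TT_S n k r hkm)).injective (Subsingleton.elim _ _)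
    | succ t ih =>
      intro m hkm hmd
      have hβm := ih (m + 1) (by omega) (by omega)
      have hmd1 : m < d := by omega
      have hf := hfac ⟨m, hmd1⟩
      have hf' : g n k r U V ⟨m, hmd1⟩ (β ⟨m, by omega⟩) (i ⟨m, hmd1⟩)
          (β ⟨m + 1, by omega⟩) ≠ 0 := hf
      clear hf
      unfold g at hf'
      split at hf'
      · exfalso; rename_i h1; simp only [Fin.val_mk] at h1; omega
      split at hf'
      · exfalso; rename_i h1 h2; simp only [Fin.val_mk] at h2; omega
      split at hf'
      · exfalso; rename_i h1 h2 h3; simp only [Fin.val_mk] at h3; omega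
      rw [ite_ne_right_iff] at hf'
      obtain ⟨hcond, -⟩ := hf'
      rw [hβm, cast_Phi_S i (by omega)] at hcond
      rw [consS_res n i hmd1] at hcond
      exact Phi_eq_of_cast_S i hkm _ hcond
  funext j
  rcases j with ⟨jv, hj⟩
  rcases lt_trichotomy jv k with h | h | h
  · exact claimP jv h
  · subst h
    exact Phi_eq_of_cast_R i rfl _ rfl
  · exact claimS (d - jv) jv h (by omega)

end MainB

section Key

variable {d : ℕ} {n : Fin d → ℕ} {k r : ℕ}
variable (U : PT n k → Fin r → ℂ) (V : Fin r → ST n k → ℂ)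
variable (i : (j : Fin d) → Fin (n j))

theorem sum_prod_g (hk1 : 1 ≤ k) (hkd : k < d) :
    (∑ β : (j : Fin (d + 1)) → TT n k r (j : ℕ),
        ∏ j : Fin d, g n k r U V j (β j.castSucc) (i j) (β j.succ))
      = ∑ ρ : Fin r, U (resP n i k) ρ * V ρ (resS n i k) := by
  classical
  have hinj : Function.Injective
      (fun (ρ : Fin r) => fun (j : Fin (d + 1)) => Phi n k r i ρ (j : ℕ)) := by
    intro ρ1 ρ2 h
    have hj := congrFun h ⟨k, by omega⟩
    have h1 := cast_Phi_R (n := n) (k := k) (r := r) i (ρ := ρ1) (j := k) rfl (TT_R n k r)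
    have h2 := cast_Phi_R (n := n) (k := k) (r := r) i (ρ := ρ2) (j := k) rfl (TT_R n k r)
    rw [← h1, ← h2]
    exact congrArg _ hj
  have step1 :
      (∑ β : (j : Fin (d + 1)) → TT n k r (j : ℕ),
        ∏ j : Fin d, g n k r U V j (β j.castSucc) (i j) (β j.succ))
      = ∑ β ∈ Finset.image
          (fun (ρ : Fin r) => fun (j : Fin (d + 1)) => Phi n k r i ρ (j : ℕ))
          Finset.univ,
        ∏ j : Fin d, g n k r U V j (β j.castSucc) (i j) (β j.succ) := by
    symm
    apply Finset.sum_subset (Finset.subset_univ _)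
    intro β _ hβ
    by_contra hne
    apply hβ
    rw [prod_g_ne_zero U V i hk1 hkd β hne]
    exact Finset.mem_image_of_mem _ (Finset.mem_univ _)
  rw [step1, Finset.sum_image (fun a _ b _ h => hinj h)]
  exact Finset.sum_congr rfl fun ρ _ => prod_g_Phi U V i hk1 hkd ρ

end Key


end TTaux


open TTaux


/-- The `k`-th unfolding of a `d`-dimensional tensor. -/
def unfolding (d : ℕ) (n : Fin d → ℕ) (X : ((j : Fin d) → Fin (n j)) → ℂ) (k : ℕ) :
    Matrix ((j : {j : Fin d // (j : ℕ) < k}) → Fin (n j.1))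
      ((j : {j : Fin d // ¬ (j : ℕ) < k}) → Fin (n j.1)) ℂ :=
  Matrix.of fun row col =>
    X fun j => if h : (j : ℕ) < k then row ⟨j, h⟩ else col ⟨j, h⟩

/-- For each `1 ≤ k ≤ d-1` there is a TT representation of `X` whose `k`-th
core size equals the rank of the `k`-th unfolding; in particular the minimal
TT rank `r_k` satisfies `r_k ≤ rank X_k`. -/
theorem exists_TT_with_core_size_eq_unfolding_rank (d : ℕ) (n : Fin d → ℕ)
    (X : ((j : Fin d) → Fin (n j)) → ℂ)
    (k : ℕ) (hk1 : 1 ≤ k) (hk2 : k ≤ d - 1) :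
    ∃ s : Fin (d + 1) → ℕ, s 0 = 1 ∧ s (Fin.last d) = 1 ∧
      s ⟨k, by omega⟩ = (unfolding d n X k).rank ∧
      ∃ G : (j : Fin d) → Fin (s j.castSucc) → Fin (n j) → Fin (s j.succ) → ℂ,
        ∀ i, X i = ∑ α : (j : Fin (d + 1)) → Fin (s j),
          ∏ j : Fin d, G j (α j.castSucc) (i j) (α j.succ) := by
  classical
  have hkd : k < d := by omega
  obtain ⟨U, V, hUV⟩ := rank_factorization (unfolding d n X k)
  refine ⟨fun j => Fintype.card (TT n k (unfolding d n X k).rank (j : ℕ)),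
    card_TT_zero n k _ hk1, card_TT_d n k _ hkd, card_TT_k n k _, ?_⟩
  refine ⟨fun j a x b => g n k (unfolding d n X k).rank U V j
      ((Fintype.equivFin (TT n k (unfolding d n X k).rank (j : ℕ))).symm a) x
      ((Fintype.equivFin (TT n k (unfolding d n X k).rank ((j : ℕ) + 1))).symm b),
    fun i => ?_⟩
  have h4 : unfolding d n X k (resP n i k) (resS n i k) = X i := by
    simp only [unfolding, Matrix.of_apply]
    refine congrArg X (funext fun j => ?_)
    by_cases h : (j : ℕ) < k
    · rw [dif_pos h]; rfl
    · rw [dif_neg h]; rfl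
  have h5 :
      (∑ α : (j : Fin (d + 1)) →
          Fin (Fintype.card (TT n k (unfolding d n X k).rank (j : ℕ))),
        ∏ j : Fin d, g n k (unfolding d n X k).rank U V j
          ((Fintype.equivFin (TT n k (unfolding d n X k).rank (j : ℕ))).symm
            (α j.castSucc)) (i j)
          ((Fintype.equivFin (TT n k (unfolding d n X k).rank ((j : ℕ) + 1))).symm
            (α j.succ)))
      = ∑ β : (j : Fin (d + 1)) → TT n k (unfolding d n X k).rank (j : ℕ),
          ∏ j : Fin d, g n k (unfolding d n X k).rank U V j
            (β j.castSucc) (i j) (β j.succ) :=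
    Fintype.sum_equiv
      (Equiv.piCongrRight fun j : Fin (d + 1) => (Fintype.equivFin
        (TT n k (unfolding d n X k).rank (j : ℕ))).symm) _ _ (fun α => rfl)
  rw [h5, sum_prod_g U V i hk1 hkd, ← hUV (resP n i k) (resS n i k), h4]
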